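/- A real form f of even degree m in n variables is a sum of m-th powers of real linear forms, f = L_1^m + ··· + L_r^m, if and only if the H-truncated multisequence f̌ defined by f = Σ_{|α|=m} binom(m,α) f̌_α x^α admits a representing measure supported in the half-sphere S^{n−1}_+ = {x ∈ ℝ^n : ‖x‖ = 1, x_1 + ··· + x_n ≥ 0}. -/

import Mathlib

open MeasureTheory Finset

def homExponents (n m : ℕ) : Finset (Fin n → ℕ) :=
  (Fintype.piFinset fun _ : Fin n => Finset.range (m + 1)).filter
    (fun α => ∑ j, α j = m)

lemma homExponents_eq (n m : ℕ) : homExponents n m = Finset.piAntidiag Finset.univ m := by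
  ext α
  simp only [homExponents, Finset.mem_filter, Fintype.mem_piFinset, Finset.mem_range,
    Nat.lt_succ_iff, Finset.mem_piAntidiag, Finset.mem_univ, implies_true, and_true]
  exact ⟨fun h => h.2, fun h =>
    ⟨fun j => h ▸ Finset.single_le_sum (fun i _ => Nat.zero_le _) (Finset.mem_univ j), h⟩⟩

lemma multinomial_expand {n : ℕ} (m : ℕ) (y : Fin n → ℝ) :
    (∑ j, y j) ^ m
      = ∑ α ∈ homExponents n m, (Nat.multinomial Finset.univ α : ℝ) * ∏ j, y j ^ α j := by
  rw [homExponents_eq, Finset.sum_pow_eq_sum_piAntidiag]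

lemma dot_pow_expand {n : ℕ} (m : ℕ) (a x : Fin n → ℝ) :
    (∑ j, a j * x j) ^ m
      = ∑ α ∈ homExponents n m, (Nat.multinomial Finset.univ α : ℝ) *
          ((∏ j, a j ^ α j) * ∏ j, x j ^ α j) := by
  rw [multinomial_expand]
  refine Finset.sum_congr rfl fun α _ => ?_
  congr 1
  rw [← Finset.prod_mul_distrib]
  simp [mul_pow]

def halfSphere (n : ℕ) : Set (Fin n → ℝ) :=
  {x : Fin n → ℝ | ∑ j, (x j) ^ 2 = 1 ∧ 0 ≤ ∑ j, x j}

lemma isClosed_halfSphere (n : ℕ) : IsClosed (halfSphere n) := by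
  have h1 : Continuous fun x : Fin n → ℝ => ∑ j, (x j) ^ 2 :=
    continuous_finset_sum _ fun j _ => (continuous_apply j).pow 2
  have h2 : Continuous fun x : Fin n → ℝ => ∑ j, x j :=
    continuous_finset_sum _ fun j _ => continuous_apply j
  exact (isClosed_eq h1 continuous_const).inter (isClosed_le continuous_const h2)

lemma monomial_continuous {n : ℕ} (α : Fin n → ℕ) :
    Continuous fun x : Fin n → ℝ => ∏ j, x j ^ α j :=
  continuous_finset_prod _ fun j _ => (continuous_apply j).pow (α j)

lemma coeff_eq_of_fun_eq {n m : ℕ} (a b : (Fin n → ℕ) → ℝ)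
    (h : ∀ x : Fin n → ℝ, ∑ α ∈ homExponents n m, a α * ∏ j, x j ^ α j
        = ∑ α ∈ homExponents n m, b α * ∏ j, x j ^ α j) :
    ∀ α ∈ homExponents n m, a α = b α := by
  classical
  set ι : (Fin n → ℕ) → (Fin n →₀ ℕ) := fun α => Finsupp.equivFunOnFinite.symm α with hι
  have hinj : Function.Injective ι := Finsupp.equivFunOnFinite.symm.injective
  set P : MvPolynomial (Fin n) ℝ :=
    ∑ α ∈ homExponents n m, MvPolynomial.monomial (ι α) (a α - b α) with hPdef
  have heval : ∀ x : Fin n → ℝ, MvPolynomial.eval x P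
      = ∑ α ∈ homExponents n m, (a α - b α) * ∏ j, x j ^ α j := by
    intro x
    rw [hPdef, map_sum]
    refine Finset.sum_congr rfl fun α _ => ?_
    rw [MvPolynomial.eval_monomial]
    congr 1
    rw [Finsupp.prod_pow]
    rfl
  have hP : P = 0 := by
    apply MvPolynomial.funext
    intro x
    rw [heval, map_zero]
    simp only [sub_mul, Finset.sum_sub_distrib, h x, sub_self]
  intro α hα
  have hc := congrArg (MvPolynomial.coeff (ι α)) hP
  rw [hPdef] at hc
  rw [MvPolynomial.coeff_zero] at hc
  rw [MvPolynomial.coeff_sum] at hc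
  rw [Finset.sum_eq_single α (fun β _ hβ => by
      rw [MvPolynomial.coeff_monomial, if_neg (fun hh => hβ (hinj hh))])
    (fun hh => absurd hα hh)] at hc
  rw [MvPolynomial.coeff_monomial, if_pos rfl] at hc
  linarith

/-- Forward direction. -/
lemma forward_dir (n m : ℕ) (hm : Even m) (hm0 : 0 < m) (fc : (Fin n → ℕ) → ℝ)
    (r : ℕ) (L : Fin r → (Fin n → ℝ))
    (hL : ∀ x : Fin n → ℝ,
      ∑ α ∈ homExponents n m,
          (Nat.multinomial Finset.univ α : ℝ) * fc α * ∏ j, x j ^ α j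
        = ∑ i, (∑ j, L i j * x j) ^ m) :
    (∃ μ : Measure (Fin n → ℝ),
      μ (halfSphere n)ᶜ = 0 ∧
      ∀ α ∈ homExponents n m,
        Integrable (fun x => ∏ j, x j ^ α j) μ ∧
          fc α = ∫ x, ∏ j, x j ^ α j ∂μ) := by
  classical
  rcases Nat.eq_zero_or_pos n with hn | hn
  · subst hn
    refine ⟨0, by simp, fun α hα => ?_⟩
    exfalso
    simp only [homExponents, Finset.mem_filter] at hα
    have : ∑ j : Fin 0, α j = 0 := by simp
    omega
  · -- setup
    set j0 : Fin n := ⟨0, hn⟩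
    set ν : Fin r → ℝ := fun i => Real.sqrt (∑ j, (L i j) ^ 2) with hν
    set sgn : Fin r → ℝ := fun i => if 0 ≤ ∑ j, L i j then 1 else -1 with hsgn
    set u : Fin r → (Fin n → ℝ) := fun i =>
      if L i = 0 then Pi.single j0 1 else fun j => sgn i * L i j / ν i with hu
    set c : Fin r → ℝ := fun i => if L i = 0 then 0 else ν i ^ m with hc
    have hsgn_sq : ∀ i, sgn i ^ 2 = 1 := by
      intro i; rw [hsgn]; dsimp only; split <;> ring
    have hsgn_pow : ∀ i, sgn i ^ m = 1 := by
      intro i; rw [hsgn]; dsimp only; split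
      · exact one_pow m
      · exact hm.neg_one_pow
    have hν_pos : ∀ i, L i ≠ 0 → 0 < ν i := by
      intro i hi
      apply Real.sqrt_pos.mpr
      rcases Function.ne_iff.mp hi with ⟨j, hj⟩
      have h2 : (0:ℝ) < (L i j) ^ 2 :=
        lt_of_le_of_ne (sq_nonneg _) (Ne.symm (pow_ne_zero 2 hj))
      exact lt_of_lt_of_le h2 (Finset.single_le_sum (f := fun j => (L i j) ^ 2)
        (fun k _ => sq_nonneg _) (Finset.mem_univ j))
    have hν_sq : ∀ i, ν i ^ 2 = ∑ j, (L i j) ^ 2 := by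
      intro i; exact Real.sq_sqrt (Finset.sum_nonneg fun j _ => sq_nonneg _)
    have hc_nonneg : ∀ i, 0 ≤ c i := by
      intro i; rw [hc]; dsimp only; split
      · exact le_refl 0
      · positivity
    have hu_mem : ∀ i, u i ∈ halfSphere n := by
      intro i
      rw [hu]; dsimp only
      split
      case isTrue h =>
        constructor
        · simp [Pi.single_apply, sq, j0]
        · simp [Pi.single_apply, j0]
      case isFalse h =>
        have hν' := hν_pos i h
        constructor
        · have : ∀ j, (sgn i * L i j / ν i) ^ 2 = (L i j) ^ 2 * (1 / ν i ^ 2) := by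
            intro j
            field_simp
            rw [hsgn_sq i, one_mul]
          simp only [this]
          rw [← Finset.sum_mul, ← hν_sq i]
          field_simp
        · have : ∑ j, sgn i * L i j / ν i = sgn i * (∑ j, L i j) / ν i := by
            rw [Finset.mul_sum, Finset.sum_div]
          rw [this]
          rw [hsgn]; dsimp only
          split
          case isTrue h2 => positivity
          case isFalse h2 =>
            push_neg at h2
            apply div_nonneg _ hν'.le
            nlinarith
    have hLc : ∀ i (x : Fin n → ℝ),
        (∑ j, L i j * x j) ^ m = c i * (∑ j, u i j * x j) ^ m := by
      intro i x
      rw [hu, hc]; dsimp only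
      split
      case isTrue h =>
        have : ∀ j, L i j = 0 := fun j => congrFun h j
        simp [this, zero_pow hm0.ne']
      case isFalse h =>
        have hν' := hν_pos i h
        have : ∑ j, sgn i * L i j / ν i * x j = sgn i * (∑ j, L i j * x j) / ν i := by
          rw [Finset.mul_sum, Finset.sum_div]
          exact Finset.sum_congr rfl fun j _ => by ring
        rw [this, div_pow, mul_pow, hsgn_pow i, one_mul]
        field_simp
    -- the atomic measure
    set μ : Measure (Fin n → ℝ) :=
      ∑ i, (ENNReal.ofReal (c i)) • Measure.dirac (u i) with hμ
    have hSmeas : MeasurableSet (halfSphere n)ᶜ :=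
      (isClosed_halfSphere n).measurableSet.compl
    have hint : ∀ (i : Fin r) (g : (Fin n → ℝ) → ℝ), Continuous g →
        Integrable g ((ENNReal.ofReal (c i)) • Measure.dirac (u i)) := by
      intro i g hg
      refine Integrable.smul_measure ?_ ENNReal.ofReal_ne_top
      refine ⟨hg.aestronglyMeasurable, ?_⟩
      rw [HasFiniteIntegral, lintegral_dirac]
      exact ENNReal.coe_lt_top
    have hint' : ∀ g : (Fin n → ℝ) → ℝ, Continuous g → Integrable g μ := by
      intro g hg
      rw [hμ]
      exact integrable_finset_sum_measure.mpr fun i _ => hint i g hg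
    have hintegral : ∀ g : (Fin n → ℝ) → ℝ, Continuous g →
        ∫ x, g x ∂μ = ∑ i, c i * g (u i) := by
      intro g hg
      rw [hμ, integral_finset_sum_measure fun i _ => hint i g hg]
      refine Finset.sum_congr rfl fun i _ => ?_
      rw [integral_smul_measure, integral_dirac, ENNReal.toReal_ofReal (hc_nonneg i),
        smul_eq_mul]
    -- identify the coefficients
    have hkey : ∀ α ∈ homExponents n m,
        (Nat.multinomial Finset.univ α : ℝ) * fc α
          = (Nat.multinomial Finset.univ α : ℝ) * ∑ i, c i * ∏ j, u i j ^ α j := by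
      apply coeff_eq_of_fun_eq
      intro x
      calc ∑ α ∈ homExponents n m, (Nat.multinomial Finset.univ α : ℝ) * fc α * ∏ j, x j ^ α j
          = ∑ i, (∑ j, L i j * x j) ^ m := hL x
        _ = ∑ i, c i * (∑ j, u i j * x j) ^ m := by
            exact Finset.sum_congr rfl fun i _ => hLc i x
        _ = ∑ i, c i * ∑ α ∈ homExponents n m, (Nat.multinomial Finset.univ α : ℝ) *
              ((∏ j, u i j ^ α j) * ∏ j, x j ^ α j) := by
            exact Finset.sum_congr rfl fun i _ => by rw [dot_pow_expand]
        _ = ∑ α ∈ homExponents n m, (Nat.multinomial Finset.univ α : ℝ) *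
              (∑ i, c i * ∏ j, u i j ^ α j) * ∏ j, x j ^ α j := by
            simp_rw [Finset.mul_sum]
            rw [Finset.sum_comm]
            refine Finset.sum_congr rfl fun α _ => ?_
            rw [Finset.sum_mul]
            exact Finset.sum_congr rfl fun i _ => by ring
    refine ⟨μ, ?_, fun α hα => ?_⟩
    · rw [hμ, Measure.finset_sum_apply]
      refine Finset.sum_eq_zero fun i _ => ?_
      rw [Measure.smul_apply, Measure.dirac_apply' _ hSmeas]
      have : u i ∉ (halfSphere n)ᶜ := fun hmem => hmem (hu_mem i)
      rw [Set.indicator_of_notMem this]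
      simp
    · have hgα := monomial_continuous α
      refine ⟨hint' _ hgα, ?_⟩
      have hb : (Nat.multinomial Finset.univ α : ℝ) ≠ 0 := by
        exact_mod_cast (Nat.multinomial_pos _ _).ne'
      have := hkey α hα
      have hfc : fc α = ∑ i, c i * ∏ j, u i j ^ α j := mul_left_cancel₀ hb this
      rw [hfc, hintegral _ hgα]

section Hull
variable {E : Type} [NormedAddCommGroup E] [NormedSpace ℝ E] [FiniteDimensional ℝ E]

local notation "N" => Module.finrank ℝ E + 1

lemma convexHull_eq_image {K : Set E} {x0 : E} (hx0 : x0 ∈ K) :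
    convexHull ℝ K =
      (fun p : (Fin N → ℝ) × (Fin N → E) => ∑ i, p.1 i • p.2 i) ''
        ((stdSimplex ℝ (Fin N)) ×ˢ Set.univ.pi fun _ => K) := by
  classical
  apply Set.Subset.antisymm
  · intro x hx
    obtain ⟨ι, hfin, z, w, hrange, hindep, hw0, hw1, hsum⟩ :=
      eq_pos_convex_span_of_mem_convexHull hx
    letI := hfin
    have hcard : Fintype.card ι ≤ N := by
      rcases isEmpty_or_nonempty ι with h | h
      · simp [Fintype.card_eq_zero]
      · have h1 := hindep.finrank_vectorSpan_add_one
        have h2 : Module.finrank ℝ (vectorSpan ℝ (Set.range z)) ≤ Module.finrank ℝ E :=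
          Submodule.finrank_le _
        omega
    obtain ⟨e⟩ : Nonempty (ι ↪ Fin N) :=
      Function.Embedding.nonempty_of_card_le (by simpa using hcard)
    set w' : Fin N → ℝ := fun j => if h : ∃ i, e i = j then w h.choose else 0 with hw'
    set z' : Fin N → E := fun j => if h : ∃ i, e i = j then z h.choose else x0 with hz'
    have hch : ∀ i : ι, (⟨i, rfl⟩ : ∃ i', e i' = e i).choose = i := by
      intro i
      exact e.injective (⟨i, rfl⟩ : ∃ i', e i' = e i).choose_spec
    have hw'e : ∀ i : ι, w' (e i) = w i := by
      intro i; simp only [hw', dif_pos (⟨i, rfl⟩ : ∃ i', e i' = e i)]; rw [hch]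
    have hz'e : ∀ i : ι, z' (e i) = z i := by
      intro i; simp only [hz', dif_pos (⟨i, rfl⟩ : ∃ i', e i' = e i)]; rw [hch]
    have hshrink : ∀ (F : Fin N → E), (∀ j, (¬∃ i, e i = j) → F j = 0) →
        ∑ j, F j = ∑ i, F (e i) := by
      intro F hF
      rw [← Finset.sum_map Finset.univ e F]
      exact (Finset.sum_subset (Finset.subset_univ _) (fun j _ hj => hF j (by
        simpa [Finset.mem_map] using hj))).symm
    refine ⟨(w', z'), ⟨?_, ?_⟩, ?_⟩
    · constructor
      · intro j
        by_cases h : ∃ i, e i = j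
        · simp only [hw', dif_pos h]; exact (hw0 _).le
        · simp [hw', h]
      · have : ∀ (F : Fin N → ℝ), (∀ j, (¬∃ i, e i = j) → F j = 0) →
            ∑ j, F j = ∑ i, F (e i) := by
          intro F hF
          rw [← Finset.sum_map Finset.univ e F]
          exact (Finset.sum_subset (Finset.subset_univ _) (fun j _ hj => hF j (by
            simpa [Finset.mem_map] using hj))).symm
        rw [this w' (fun j hj => by simp [hw', hj])]
        simp only [hw'e]
        exact hw1
    · intro j _
      by_cases h : ∃ i, e i = j
      · simp only [hz', dif_pos h]
        exact hrange ⟨h.choose, rfl⟩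
      · simpa [hz', h] using hx0
    · show ∑ j, w' j • z' j = x
      rw [hshrink (fun j => w' j • z' j) (fun j hj => by simp [hw', hj])]
      simp only [hw'e, hz'e]
      exact hsum
  · rintro x ⟨⟨w, z⟩, ⟨hw, hz⟩, rfl⟩
    have hw1 : ∑ i, w i = 1 := hw.2
    have := Finset.centerMass_mem_convexHull (Finset.univ) (fun i _ => hw.1 i)
      (by rw [hw1]; norm_num) (fun i (_ : i ∈ Finset.univ) => hz i (Set.mem_univ i))
    rwa [Finset.centerMass_eq_of_sum_1 _ _ hw1] at this

lemma isCompact_image_simplex {K : Set E} (hK : IsCompact K) :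
    IsCompact ((fun p : (Fin N → ℝ) × (Fin N → E) => ∑ i, p.1 i • p.2 i) ''
        ((stdSimplex ℝ (Fin N)) ×ˢ Set.univ.pi fun _ => K)) := by
  refine IsCompact.image ?_ ?_
  · exact (isCompact_stdSimplex ℝ _).prod (isCompact_univ_pi fun _ => hK)
  · exact continuous_finset_sum _ fun i _ =>
      ((continuous_apply i).comp continuous_fst).smul ((continuous_apply i).comp continuous_snd)

end Hull

lemma isCompact_halfSphere (n : ℕ) : IsCompact (halfSphere n) := by
  rw [Metric.isCompact_iff_isClosed_bounded]
  refine ⟨isClosed_halfSphere n, Bornology.IsBounded.subset (Metric.isBounded_closedBall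
    (x := (0 : Fin n → ℝ)) (r := 1)) ?_⟩
  intro x hx
  rw [Metric.mem_closedBall, dist_zero_right]
  rw [pi_norm_le_iff_of_nonneg (by norm_num)]
  intro j
  have h1 : (x j) ^ 2 ≤ 1 := hx.1 ▸ Finset.single_le_sum (f := fun j => (x j) ^ 2)
    (fun k _ => sq_nonneg _) (Finset.mem_univ j)
  rw [Real.norm_eq_abs, abs_le]
  constructor <;> nlinarith

lemma backward_dir (n m : ℕ) (hm : Even m) (hm0 : 0 < m) (fc : (Fin n → ℕ) → ℝ)
    (μ : Measure (Fin n → ℝ))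
    (hsupp : μ (halfSphere n)ᶜ = 0)
    (hmom : ∀ α ∈ homExponents n m,
        Integrable (fun x => ∏ j, x j ^ α j) μ ∧ fc α = ∫ x, ∏ j, x j ^ α j ∂μ) :
    ∃ (r : ℕ) (L : Fin r → (Fin n → ℝ)), ∀ x : Fin n → ℝ,
      ∑ α ∈ homExponents n m, (Nat.multinomial Finset.univ α : ℝ) * fc α * ∏ j, x j ^ α j
        = ∑ i, (∑ j, L i j * x j) ^ m := by
  classical
  set K := halfSphere n with hK
  have hKc : IsCompact K := isCompact_halfSphere n
  have hKmeas : MeasurableSet K := (isClosed_halfSphere n).measurableSet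
  obtain ⟨k, hk⟩ := hm
  have hkm : m = 2 * k := by omega
  -- the doubling map
  have hβmem : ∀ β ∈ homExponents n k, (fun j => 2 * β j) ∈ homExponents n m := by
    intro β hβ
    rw [homExponents_eq] at hβ ⊢
    rw [Finset.mem_piAntidiag] at hβ ⊢
    refine ⟨?_, fun i _ => Finset.mem_univ i⟩
    rw [← Finset.mul_sum, hβ.1]
    exact hkm.symm
  -- the function g with g = 1 on K
  have hg1 : ∀ x ∈ K, ∑ β ∈ homExponents n k, (Nat.multinomial Finset.univ β : ℝ) *
      ∏ j, x j ^ (2 * β j) = 1 := by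
    intro x hx
    have := multinomial_expand (n := n) k (fun j => x j ^ 2)
    rw [hx.1, one_pow] at this
    calc ∑ β ∈ homExponents n k, (Nat.multinomial Finset.univ β : ℝ) * ∏ j, x j ^ (2 * β j)
        = ∑ β ∈ homExponents n k, (Nat.multinomial Finset.univ β : ℝ) *
            ∏ j, (x j ^ 2) ^ β j := by
          refine Finset.sum_congr rfl fun β _ => ?_
          congr 1
          exact Finset.prod_congr rfl fun j _ => by rw [← pow_mul, mul_comm 2 (β j)]
      _ = 1 := this.symm
  -- μ is a finite measure
  have hμK : μ Set.univ = μ K := by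
    have h1 : μ Set.univ ≤ μ K := by
      calc μ Set.univ ≤ μ K + μ Kᶜ := by
            rw [← Set.union_compl_self K]; exact measure_union_le _ _
        _ = μ K := by rw [hsupp, add_zero]
    exact le_antisymm h1 (measure_mono (Set.subset_univ K))
  have hμfin : μ Set.univ < ⊤ := by
    rw [hμK]
    have e1 : μ K = ∫⁻ x in K, ENNReal.ofReal (∑ β ∈ homExponents n k,
        (Nat.multinomial Finset.univ β : ℝ) * ∏ j, x j ^ (2 * β j)) ∂μ := by
      rw [← setLIntegral_one]
      refine setLIntegral_congr_fun hKmeas (fun x hx => ?_)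
      simp only [hg1 x hx, ENNReal.ofReal_one]
    rw [e1]
    calc ∫⁻ x in K, ENNReal.ofReal (∑ β ∈ homExponents n k,
            (Nat.multinomial Finset.univ β : ℝ) * ∏ j, x j ^ (2 * β j)) ∂μ
        ≤ ∫⁻ x, ENNReal.ofReal (∑ β ∈ homExponents n k,
            (Nat.multinomial Finset.univ β : ℝ) * ∏ j, x j ^ (2 * β j)) ∂μ :=
          setLIntegral_le_lintegral _ _
      _ = ∫⁻ x, ∑ β ∈ homExponents n k, ENNReal.ofReal (
            (Nat.multinomial Finset.univ β : ℝ) * ∏ j, x j ^ (2 * β j)) ∂μ := by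
          refine lintegral_congr fun x => ?_
          rw [ENNReal.ofReal_sum_of_nonneg]
          intro β _
          have hnn : ∀ j, (0:ℝ) ≤ x j ^ (2 * β j) := fun j => by
            rw [mul_comm, pow_mul]; positivity
          exact mul_nonneg (Nat.cast_nonneg _) (Finset.prod_nonneg fun j _ => hnn j)
      _ = ∑ β ∈ homExponents n k, ∫⁻ x, ENNReal.ofReal (
            (Nat.multinomial Finset.univ β : ℝ) * ∏ j, x j ^ (2 * β j)) ∂μ := by
          refine lintegral_finset_sum' _ fun β _ => ?_
          exact (ENNReal.measurable_ofReal.comp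
            ((monomial_continuous (fun j => 2 * β j)).measurable.const_mul _)).aemeasurable
      _ < ⊤ := by
          refine ENNReal.sum_lt_top.mpr fun β hβ => ?_
          have hInt : Integrable (fun x => (Nat.multinomial Finset.univ β : ℝ) *
              ∏ j, x j ^ (2 * β j)) μ := ((hmom _ (hβmem β hβ)).1).const_mul _
          exact hInt.lintegral_lt_top
  haveI : IsFiniteMeasure μ := ⟨hμfin⟩
  -- the moment vector and the moment map
  set H := homExponents n m with hH
  set V := ({α // α ∈ homExponents n m} → ℝ) with hV
  set v : (Fin n → ℝ) → V := fun x α => ∏ j, x j ^ (α : Fin n → ℕ) j with hv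
  have hv_cont : Continuous v := continuous_pi fun α => monomial_continuous _
  set w : V := fun α => fc α with hw
  set t := (μ Set.univ).toReal with ht
  have htnn : 0 ≤ t := ENNReal.toReal_nonneg
  rcases eq_or_lt_of_le htnn with ht0 | htpos
  · -- t = 0 : μ = 0 and all moments vanish
    have hμ0 : μ = 0 := by
      have := ENNReal.toReal_eq_zero_iff (μ Set.univ) |>.mp ht0.symm
      rcases this with h | h
      · exact Measure.measure_univ_eq_zero.mp h
      · exact absurd h hμfin.ne
    have hfc0 : ∀ α ∈ homExponents n m, fc α = 0 := fun α hα => by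
      rw [(hmom α hα).2, hμ0, integral_zero_measure]
    refine ⟨0, fun _ => 0, fun x => ?_⟩
    rw [Finset.sum_eq_zero fun α hα => by rw [hfc0 α hα, mul_zero, zero_mul]]
    simp
  · -- t > 0
    have htne : t ≠ 0 := htpos.ne'
    -- K is nonempty
    have hKne : K.Nonempty := by
      by_contra hne
      rw [Set.not_nonempty_iff_eq_empty] at hne
      rw [hμK, hne, measure_empty] at hμfin ht
      simp [ht] at htpos
    obtain ⟨x0, hx0⟩ := hKne
    have hx0' : v x0 ∈ v '' K := Set.mem_image_of_mem v hx0
    have hK'c : IsCompact (v '' K) := hKc.image hv_cont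
    set C := convexHull ℝ (v '' K) with hC
    have hCcl : IsClosed C := by
      rw [hC, convexHull_eq_image hx0']
      exact (isCompact_image_simplex hK'c).isClosed
    have hCconv : Convex ℝ C := convex_convexHull ℝ _
    -- integrability of the moment map components
    have hw_int : ∀ α : {α // α ∈ homExponents n m},
        Integrable (fun x => v x α) μ := fun α => (hmom α.1 α.2).1
    have hw_val : ∀ α : {α // α ∈ homExponents n m},
        w α = ∫ x, v x α ∂μ := fun α => (hmom α.1 α.2).2
    -- the normalized moment vector lies in C
    have hp : t⁻¹ • w ∈ C := by
      by_contra hpc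
      obtain ⟨f, s0, hfs, hsp⟩ := geometric_hahn_banach_closed_point hCconv hCcl hpc
      -- representation of f on the pi type
      have hrep : ∀ y : V, f y = ∑ α, y α * f (Pi.single α 1) := by
        intro y
        have hy : y = ∑ α, y α • (Pi.single α (1:ℝ) : V) := by
          conv_lhs => rw [← Finset.univ_sum_single y]
          exact Finset.sum_congr rfl fun α _ => by
            rw [← Pi.single_smul, smul_eq_mul, mul_one]
        conv_lhs => rw [hy]
        rw [map_sum]
        exact Finset.sum_congr rfl fun α _ => by rw [f.map_smul, smul_eq_mul]
      have hfv_int : Integrable (fun x => f (v x)) μ := by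
        have : (fun x => f (v x)) = fun x => ∑ α, v x α * f (Pi.single α 1) := by
          funext x; rw [hrep]
        rw [this]
        exact integrable_finset_sum _ fun α _ => (hw_int α).mul_const _
      have hfw : f w = ∫ x, f (v x) ∂μ := by
        rw [hrep w]
        have : ∀ x, f (v x) = ∑ α, v x α * f (Pi.single α 1) := fun x => hrep (v x)
        calc ∑ α, w α * f (Pi.single α 1)
            = ∑ α, (∫ x, v x α ∂μ) * f (Pi.single α 1) := by
              exact Finset.sum_congr rfl fun α _ => by rw [hw_val α]
          _ = ∑ α, ∫ x, v x α * f (Pi.single α 1) ∂μ := by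
              exact Finset.sum_congr rfl fun α _ => (integral_mul_const _ _).symm
          _ = ∫ x, ∑ α, v x α * f (Pi.single α 1) ∂μ :=
              (integral_finset_sum _ fun α _ => (hw_int α).mul_const _).symm
          _ = ∫ x, f (v x) ∂μ := by
              exact integral_congr_ae (ae_of_all _ fun x => (hrep (v x)).symm)
      have hae : ∀ᵐ x ∂μ, f (v x) ≤ s0 := by
        rw [ae_iff]
        refine measure_mono_null ?_ hsupp
        intro x hx
        simp only [Set.mem_setOf_eq, not_le] at hx
        intro hxK
        have : v x ∈ C := subset_convexHull ℝ _ (Set.mem_image_of_mem v hxK)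
        exact absurd (hfs _ this) (not_lt.mpr hx.le)
      have hle : f w ≤ s0 * t := by
        rw [hfw]
        calc ∫ x, f (v x) ∂μ ≤ ∫ _, s0 ∂μ :=
              integral_mono_ae hfv_int (integrable_const _) hae
          _ = s0 * t := by rw [integral_const, smul_eq_mul, mul_comm]; rfl
      have hgt : s0 * t < f w := by
        have h1 : f (t⁻¹ • w) = t⁻¹ * f w := by rw [f.map_smul, smul_eq_mul]
        have h2 : s0 < t⁻¹ * f w := h1 ▸ hsp
        calc s0 * t < (t⁻¹ * f w) * t := by exact mul_lt_mul_of_pos_right h2 htpos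
          _ = f w := by field_simp
      exact absurd hle (not_le.mpr hgt)
    -- extract the finite atomic representation
    rw [hC, convexHull_eq_image hx0'] at hp
    obtain ⟨p, hpmem, hsum0⟩ := hp
    obtain ⟨hwt, hz⟩ := hpmem
    obtain ⟨wt, z⟩ := p
    dsimp only at hwt hz hsum0
    have hsum : ∑ i, wt i • z i = t⁻¹ • w := hsum0
    have hz' : ∀ i, z i ∈ v '' K := fun i => hz i (Set.mem_univ i)
    choose y hyK hyv using fun i => hz' i
    -- componentwise identity
    have hcomp : ∀ α (hα : α ∈ homExponents n m),
        fc α = ∑ i : _, (t * wt i) * ∏ j, y i j ^ α j := by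
      intro α hα
      have h1 := congrFun hsum ⟨α, hα⟩
      have h2 : (∑ i : _, wt i • z i) ⟨α, hα⟩ = ∑ i : _, wt i * z i ⟨α, hα⟩ := by
        rw [Finset.sum_apply]
        exact Finset.sum_congr rfl fun i _ => rfl
      have h3 : ∀ i, z i ⟨α, hα⟩ = ∏ j, y i j ^ α j := by
        intro i; rw [← hyv i]
      have h4 : (t⁻¹ • w) ⟨α, hα⟩ = t⁻¹ * fc α := rfl
      rw [h2] at h1
      rw [h4] at h1
      simp only [h3] at h1
      have h5 : fc α = t * ∑ i : _, wt i * ∏ j, y i j ^ α j := by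
        rw [h1]
        field_simp
      rw [h5, Finset.mul_sum]
      exact Finset.sum_congr rfl fun i _ => by ring
    -- build the linear forms
    have hc_nn : ∀ i : _, 0 ≤ t * wt i := fun i => mul_nonneg htnn (hwt.1 i)
    have hpow : ∀ i : _, ((t * wt i) ^ ((m:ℝ)⁻¹)) ^ m = t * wt i := by
      intro i
      rw [← Real.rpow_natCast ((t * wt i) ^ ((m:ℝ)⁻¹)) m, ← Real.rpow_mul (hc_nn i),
        inv_mul_cancel₀ (by exact_mod_cast hm0.ne'), Real.rpow_one]
    refine ⟨Module.finrank ℝ V + 1, fun i j => ((t * wt i) ^ ((m:ℝ)⁻¹)) * y i j, fun x => ?_⟩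
    calc ∑ α ∈ homExponents n m, (Nat.multinomial Finset.univ α : ℝ) * fc α * ∏ j, x j ^ α j
        = ∑ α ∈ homExponents n m, (Nat.multinomial Finset.univ α : ℝ) *
            (∑ i : _, (t * wt i) * ∏ j, y i j ^ α j) * ∏ j, x j ^ α j := by
          exact Finset.sum_congr rfl fun α hα => by rw [hcomp α hα]
      _ = ∑ α ∈ homExponents n m, ∑ i : _, (t * wt i) *
            ((Nat.multinomial Finset.univ α : ℝ) * ((∏ j, y i j ^ α j) * ∏ j, x j ^ α j)) := by
          refine Finset.sum_congr rfl fun α _ => ?_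
          rw [Finset.mul_sum, Finset.sum_mul]
          exact Finset.sum_congr rfl fun i _ => by ring
      _ = ∑ i : _, ∑ α ∈ homExponents n m, (t * wt i) *
            ((Nat.multinomial Finset.univ α : ℝ) * ((∏ j, y i j ^ α j) * ∏ j, x j ^ α j)) :=
          Finset.sum_comm
      _ = ∑ i : _, (t * wt i) * ∑ α ∈ homExponents n m,
            (Nat.multinomial Finset.univ α : ℝ) * ((∏ j, y i j ^ α j) * ∏ j, x j ^ α j) := by
          exact Finset.sum_congr rfl fun i _ => (Finset.mul_sum _ _ _).symm
      _ = ∑ i : _, (t * wt i) * (∑ j, y i j * x j) ^ m := by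
          exact Finset.sum_congr rfl fun i _ => by rw [dot_pow_expand]
      _ = ∑ i : _, (∑ j, ((t * wt i) ^ ((m:ℝ)⁻¹)) * y i j * x j) ^ m := by
          refine Finset.sum_congr rfl fun i _ => ?_
          have : ∑ j, ((t * wt i) ^ ((m:ℝ)⁻¹)) * y i j * x j
              = ((t * wt i) ^ ((m:ℝ)⁻¹)) * ∑ j, y i j * x j := by
            rw [Finset.mul_sum]
            exact Finset.sum_congr rfl fun j _ => by ring
          rw [this, mul_pow, hpow i]


theorem soep_iff_halfSphere_measure
    (n m : ℕ) (hm : Even m) (hm0 : 0 < m) (fc : (Fin n → ℕ) → ℝ) :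
    (∃ (r : ℕ) (L : Fin r → (Fin n → ℝ)), ∀ x : Fin n → ℝ,
      ∑ α ∈ homExponents n m,
          (Nat.multinomial Finset.univ α : ℝ) * fc α * ∏ j, x j ^ α j
        = ∑ i, (∑ j, L i j * x j) ^ m) ↔
    (∃ μ : Measure (Fin n → ℝ),
      μ {x : Fin n → ℝ | ∑ j, (x j) ^ 2 = 1 ∧ 0 ≤ ∑ j, x j}ᶜ = 0 ∧
      ∀ α ∈ homExponents n m,
        Integrable (fun x => ∏ j, x j ^ α j) μ ∧
          fc α = ∫ x, ∏ j, x j ^ α j ∂μ) := by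
  constructor
  · rintro ⟨r, L, hL⟩
    exact forward_dir n m hm hm0 fc r L hL
  · rintro ⟨μ, h1, h2⟩
    exact backward_dir n m hm hm0 fc μ h1 h2
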